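/- For every integer n ≥ 1, ∑_{j=1}^{n} H_{j,1}^2/j = (1/3)H_{n,1}^3 + ∑_{j=1}^{n} H_{j,1}/j^2 − (1/3)H_{n,3}. -/
import Mathlib


open Finset Filter Real Topology

/-- Generalized harmonic number `H (n, m) = ∑_{i=1}^{n} 1/i^m` as a real number. -/
noncomputable def H (n m : ℕ) : ℝ := ∑ i ∈ Finset.Icc 1 n, (1 : ℝ) / (i : ℝ) ^ m

/-- Apéry's constant `ζ(3) = ∑_{k=1}^{∞} 1/k³`. -/
noncomputable def zeta3 : ℝ := ∑' k : ℕ, 1 / ((k : ℝ) + 1) ^ 3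

lemma H_succ (n m : ℕ) : H (n + 1) m = H n m + 1 / ((n : ℝ) + 1) ^ m := by
  unfold H
  rw [Finset.sum_Icc_succ_top (by omega)]
  push_cast
  ring

theorem sum_H1_sq_div (n : ℕ) (hn : 1 ≤ n) :
    ∑ j ∈ Finset.Icc 1 n, (H j 1) ^ 2 / (j : ℝ) =
      (1 / 3) * (H n 1) ^ 3 + (∑ j ∈ Finset.Icc 1 n, H j 1 / (j : ℝ) ^ 2)
        - (1 / 3) * H n 3 := by
  induction n, hn using Nat.le_induction with
  | base => simp [H]
  | succ n hn ih =>
    rw [Finset.sum_Icc_succ_top (by omega), Finset.sum_Icc_succ_top (by omega),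
      ih, H_succ, H_succ]
    have hx : ((n : ℝ) + 1) ≠ 0 := by positivity
    push_cast
    field_simp
    ring
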